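/- Let A be a commutative algebra and let J(A) be the set of multiplicative endomorphisms φ : A → A such that there exists an idempotent e ∈ A with φ(A) = A·φ(e) and φ restricting to an algebra isomorphism Ae → Aφ(e). Then J(A) is closed under composition: for φ, ψ ∈ J(A) with idempotents e, f, the composite ψ∘φ lies in J(A) with ψ∘φ(A) = A·ψ(φ(e))ψ(f) and associated idempotent g = (φ|_{Ae})^{-1}(φ(e)f). -/
import Mathlib


/-- The unital ideal `A·e` generated by an element `e` of a commutative ring. -/
def idealOf {A : Type*} [CommRing A] (e : A) : Set A := Set.range (fun a => a * e)

/-- **`J(A)` is closed under composition.**  Let `φ, ψ` be multiplicative `k`-linear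
endomorphisms of a commutative algebra `A` with idempotents `e, f` such that
`φ(A) = A·φ(e)`, `ψ(A) = A·ψ(f)` and `φ|_{Ae} : Ae → Aφ(e)`,
`ψ|_{Af} : Af → Aψ(f)` are bijections.  If `g = (φ|_{Ae})⁻¹(φ(e)·f)` (i.e. `g ∈ Ae`
and `φ(g) = φ(e)·f`), then `g` is idempotent, `(ψ∘φ)(g) = ψ(φ(e))·ψ(f)`,
`(ψ∘φ)(A) = A·ψ(φ(e))·ψ(f)` and `ψ∘φ` restricts to a bijection
`Ag → A·ψ(φ(e))·ψ(f)`; hence `ψ∘φ ∈ J(A)` with associated idempotent `g`. -/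
theorem JA_closed_under_composition {k A : Type*} [CommRing k] [CommRing A] [Algebra k A]
    (φ ψ : A →ₗ[k] A)
    (hφmul : ∀ x y : A, φ (x * y) = φ x * φ y)
    (hψmul : ∀ x y : A, ψ (x * y) = ψ x * ψ y)
    (e f : A) (he : e * e = e) (hf : f * f = f)
    (hφrange : Set.range φ = idealOf (φ e))
    (hφbij : Set.BijOn φ (idealOf e) (idealOf (φ e)))
    (hψrange : Set.range ψ = idealOf (ψ f))
    (hψbij : Set.BijOn ψ (idealOf f) (idealOf (ψ f)))
    (g : A) (hg : g ∈ idealOf e) (hgval : φ g = φ e * f) :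
    g * g = g ∧
    ψ (φ g) = ψ (φ e) * ψ f ∧
    Set.range (fun a => ψ (φ a)) = idealOf (ψ (φ e) * ψ f) ∧
    Set.BijOn (fun a => ψ (φ a)) (idealOf g) (idealOf (ψ (φ e) * ψ f)) := by
  have hφe : φ e * φ e = φ e := by rw [← hφmul, he]
  have hψf : ψ f * ψ f = ψ f := by rw [← hψmul, hf]
  have hψφe : ψ (φ e) * ψ (φ e) = ψ (φ e) := by rw [← hψmul, hφe]
  obtain ⟨c, hc0⟩ := hg
  have hc : c * e = g := hc0
  -- g * g = g
  have h1 : g * g = g := by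
    refine hφbij.injOn ⟨g * c, show g * c * e = g * g by rw [mul_assoc, hc]⟩ ⟨c, hc⟩ ?_
    rw [hφmul, hgval]
    calc φ e * f * (φ e * f) = (φ e * φ e) * (f * f) := by ring
    _ = φ e * f := by rw [hφe, hf]
  have h2 : ψ (φ g) = ψ (φ e) * ψ f := by rw [hgval, hψmul]
  have hG : ψ (φ g) * ψ (φ g) = ψ (φ g) := by rw [← hψmul, ← hφmul, h1]
  -- range equality
  have h3 : Set.range (fun a => ψ (φ a)) = idealOf (ψ (φ e) * ψ f) := by
    ext x
    constructor
    · rintro ⟨a, rfl⟩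
      obtain ⟨b, hb0⟩ : ψ (φ a) ∈ idealOf (ψ f) := hψrange ▸ Set.mem_range_self (φ a)
      have hb : b * ψ f = ψ (φ a) := hb0
      have h4 : ψ (φ a) * ψ (φ e) = ψ (φ a) := by
        obtain ⟨d, hd0⟩ : φ a ∈ idealOf (φ e) := hφrange ▸ Set.mem_range_self a
        have hd : d * φ e = φ a := hd0
        rw [← hψmul, ← hd, mul_assoc, hφe]
      refine ⟨b, ?_⟩
      show b * (ψ (φ e) * ψ f) = ψ (φ a)
      calc b * (ψ (φ e) * ψ f) = (b * ψ f) * ψ (φ e) := by ring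
      _ = ψ (φ a) := by rw [hb, h4]
    · rintro ⟨a, rfl⟩
      obtain ⟨b, hb⟩ : a * ψ (φ e) * ψ f ∈ Set.range ψ := by
        rw [hψrange]; exact ⟨a * ψ (φ e), rfl⟩
      obtain ⟨d, hd⟩ : b * φ g ∈ Set.range φ := by
        rw [hφrange]; exact ⟨b * f, by rw [hgval]; ring⟩
      refine ⟨d, ?_⟩
      show ψ (φ d) = a * (ψ (φ e) * ψ f)
      rw [hd, hψmul, hb, h2]
      calc a * ψ (φ e) * ψ f * (ψ (φ e) * ψ f)
          = a * ((ψ (φ e) * ψ (φ e)) * (ψ f * ψ f)) := by ring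
      _ = a * (ψ (φ e) * ψ f) := by rw [hψφe, hψf]
  refine ⟨h1, h2, h3, ?_, ?_, ?_⟩
  · -- MapsTo
    rintro x ⟨a, rfl⟩
    refine ⟨ψ (φ a), ?_⟩
    show ψ (φ a) * (ψ (φ e) * ψ f) = ψ (φ (a * g))
    rw [hφmul, hψmul, h2]
  · -- InjOn
    intro x hx y hy hxy0
    have hxy : ψ (φ x) = ψ (φ y) := hxy0
    obtain ⟨a, ha0⟩ := hx
    have ha : a * g = x := ha0
    obtain ⟨b, hb0⟩ := hy
    have hb : b * g = y := hb0
    have hxe : x ∈ idealOf e := ⟨a * c, show a * c * e = x by rw [mul_assoc, hc, ha]⟩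
    have hye : y ∈ idealOf e := ⟨b * c, show b * c * e = y by rw [mul_assoc, hc, hb]⟩
    have hφxf : φ x ∈ idealOf f := ⟨φ a * φ e, show φ a * φ e * f = φ x by
      rw [mul_assoc, ← hgval, ← hφmul, ha]⟩
    have hφyf : φ y ∈ idealOf f := ⟨φ b * φ e, show φ b * φ e * f = φ y by
      rw [mul_assoc, ← hgval, ← hφmul, hb]⟩
    exact hφbij.injOn hxe hye (hψbij.injOn hφxf hφyf hxy)
  · -- SurjOn
    rintro x ⟨a, rfl⟩
    have hx : a * (ψ (φ e) * ψ f) ∈ Set.range (fun a => ψ (φ a)) := by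
      rw [h3]; exact ⟨a, rfl⟩
    obtain ⟨d, hd0⟩ := hx
    have hd : ψ (φ d) = a * (ψ (φ e) * ψ f) := hd0
    refine ⟨d * g, ⟨d, rfl⟩, ?_⟩
    show ψ (φ (d * g)) = a * (ψ (φ e) * ψ f)
    rw [hφmul, hψmul, hd, ← h2, mul_assoc, hG, h2]
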